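/- Let k be a field of characteristic zero, F a free module of odd rank n = 2m+1 ≥ 3 over a commutative k-algebra R, with basis e_1,...,e_n, and φ ∈ Λ²F with associated skew-symmetric matrix Φ = (x_{ij}). Then for each i, e_i ∧ (Λ^m φ) = m! (−1)^{i−1} Pf(Φ_i) · e_1 ∧ ⋯ ∧ e_n, where Φ_i is Φ with its i-th row and column deleted and Pf denotes the Pfaffian. -/

import Mathlib

open ExteriorAlgebra

set_option maxHeartbeats 1000000

/-- The Pfaffian of a `2m × 2m` matrix over a commutative algebra `R` over a
field of characteristic zero (so that `R` is a `ℚ`-algebra), defined by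
`Pf(A) = (1/(2^m m!)) Σ_σ sgn(σ) Π_{i=1}^{m} A_{σ(2i-1) σ(2i)}`. -/
noncomputable def pfaffian {R : Type*} [CommRing R] [Algebra ℚ R] (m : ℕ)
    (A : Matrix (Fin (2 * m)) (Fin (2 * m)) R) : R :=
  algebraMap ℚ R (1 / ((2 : ℚ) ^ m * (m.factorial : ℚ))) *
    ∑ σ : Equiv.Perm (Fin (2 * m)),
      ((Equiv.Perm.sign σ : ℤ) : R) *
        ∏ i : Fin m,
          A (σ ⟨2 * i.val, by have := i.isLt; omega⟩)
            (σ ⟨2 * i.val + 1, by have := i.isLt; omega⟩)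


section Helpers

lemma sum_pow_expand {A κ : Type*} [Semiring A] [Fintype κ] [DecidableEq κ] (a : κ → A) (m : ℕ) :
    (∑ j, a j) ^ m = ∑ f : Fin m → κ, (List.ofFn fun k => a (f k)).prod := by
  induction m with
  | zero => simp
  | succ m ih =>
    rw [pow_succ', ih, Finset.sum_mul_sum]
    have e1 : ∑ p : κ × (Fin m → κ), a p.1 * (List.ofFn fun k => a (p.2 k)).prod
        = ∑ f : Fin (m + 1) → κ, (List.ofFn fun k => a (f k)).prod := by
      refine Fintype.sum_equiv (Fin.consEquiv fun _ => κ) _ _ (fun p => ?_)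
      rw [List.ofFn_succ, List.prod_cons]
      congr 1
    rw [← e1, Fintype.sum_prod_type]

lemma prod_ofFn_smul {R A : Type*} [CommSemiring R] [Semiring A] [Algebra R A]
    (m : ℕ) (c : Fin m → R) (y : Fin m → A) :
    (List.ofFn fun k => c k • y k).prod = (∏ k, c k) • (List.ofFn y).prod := by
  induction m with
  | zero => simp
  | succ m ih =>
    rw [List.ofFn_succ, List.ofFn_succ, List.prod_cons, List.prod_cons,
      ih (fun k => c k.succ) (fun k => y k.succ), Fin.prod_univ_succ, smul_mul_smul_comm]

end Helpers

section Flat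

/-- Flatten a sequence of `m` pairs into a sequence of length `2m`. -/
def flatPairs {α : Type*} {m : ℕ} (g : Fin m → α × α) (t : Fin (2 * m)) : α :=
  if t.val % 2 = 0 then (g ⟨t.val / 2, by omega⟩).1 else (g ⟨t.val / 2, by omega⟩).2

lemma flatPairs_mk {α : Type*} {m : ℕ} (g : Fin m → α × α) (v : ℕ) (hv : v < 2 * m) :
    flatPairs g ⟨v, hv⟩
      = if v % 2 = 0 then (g ⟨v / 2, by omega⟩).1 else (g ⟨v / 2, by omega⟩).2 := rfl

lemma flatPairs_even {α : Type*} {m : ℕ} (g : Fin m → α × α) (k : Fin m) :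
    flatPairs g ⟨2 * k.val, by omega⟩ = (g k).1 := by
  rw [flatPairs_mk, if_pos (by omega)]
  exact congrArg (fun z : Fin m => (g z).1) (Fin.ext (show 2 * k.val / 2 = k.val by omega))

lemma flatPairs_odd {α : Type*} {m : ℕ} (g : Fin m → α × α) (k : Fin m) :
    flatPairs g ⟨2 * k.val + 1, by omega⟩ = (g k).2 := by
  rw [flatPairs_mk, if_neg (by omega)]
  exact congrArg (fun z : Fin m => (g z).2) (Fin.ext (show (2 * k.val + 1) / 2 = k.val by omega))

lemma flatPairs_tail {α : Type*} {m : ℕ} (g : Fin (m + 1) → α × α) (t : Fin (2 * m)) :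
    flatPairs g (⟨t.val + 1 + 1, by omega⟩ : Fin (2 * (m + 1)))
      = flatPairs (fun k => g k.succ) t := by
  rw [flatPairs_mk, flatPairs_mk]
  by_cases h : t.val % 2 = 0
  · rw [if_pos (by omega), if_pos h]
    exact congrArg (fun z : Fin (m + 1) => (g z).1)
      (Fin.ext (show (t.val + 1 + 1) / 2 = t.val / 2 + 1 by omega))
  · rw [if_neg (by omega), if_neg h]
    exact congrArg (fun z : Fin (m + 1) => (g z).2)
      (Fin.ext (show (t.val + 1 + 1) / 2 = t.val / 2 + 1 by omega))

lemma prod_ofFn_pairs {α A : Type*} [Monoid A] (F : α → A) :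
    ∀ (m : ℕ) (g : Fin m → α × α),
    (List.ofFn fun k => F (g k).1 * F (g k).2).prod
      = (List.ofFn fun t : Fin (2 * m) => F (flatPairs g t)).prod := by
  intro m
  induction m with
  | zero => intro g; simp
  | succ m ih =>
    intro g
    rw [List.ofFn_succ, List.prod_cons, ih (fun k => g k.succ)]
    have h2 : (List.ofFn fun t : Fin (2 * (m + 1)) => F (flatPairs g t))
        = F (g 0).1 :: F (g 0).2 ::
          (List.ofFn fun t : Fin (2 * m) => F (flatPairs (fun k => g k.succ) t)) := by
      rw [show (List.ofFn fun t : Fin (2 * (m + 1)) => F (flatPairs g t))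
          = List.ofFn fun t : Fin (2 * m + 1 + 1) => F (flatPairs g t) from rfl]
      rw [List.ofFn_succ, List.ofFn_succ]
      have hz : flatPairs g (0 : Fin (2 * m + 1 + 1)) = (g 0).1 := by
        simp [flatPairs]
      have ho : flatPairs g ((0 : Fin (2 * m + 1)).succ) = (g 0).2 := by
        simp [flatPairs]
        exact congrArg (fun z : Fin (m + 1) => (g z).2)
          (Fin.ext (by simp [Nat.mod_eq_of_lt (show 1 < 2 * (m + 1) by omega)]))
      rw [hz, ho]
      refine congrArg₂ List.cons rfl (congrArg₂ List.cons rfl ?_)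
      refine congrArg List.ofFn (funext fun t => congrArg F ?_)
      exact flatPairs_tail g t
    rw [h2, List.prod_cons, List.prod_cons, mul_assoc]

end Flat

section Perms

/-- The pairs associated to a permutation: `k ↦ (h (σ (2k)), h (σ (2k+1)))`. -/
def pairsOfPerm {m : ℕ} (h : Fin (2 * m) → Fin (2 * m + 1)) (σ : Equiv.Perm (Fin (2 * m)))
    (k : Fin m) : Fin (2 * m + 1) × Fin (2 * m + 1) :=
  (h (σ ⟨2 * k.val, by have := k.isLt; omega⟩),
   h (σ ⟨2 * k.val + 1, by have := k.isLt; omega⟩))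

lemma flatPairs_pairsOfPerm {m : ℕ} (h : Fin (2 * m) → Fin (2 * m + 1))
    (σ : Equiv.Perm (Fin (2 * m))) (t : Fin (2 * m)) :
    flatPairs (pairsOfPerm h σ) t = h (σ t) := by
  by_cases hp : t.val % 2 = 0
  · have ht : t = ⟨2 * (⟨t.val / 2, by omega⟩ : Fin m).val, by omega⟩ :=
      Fin.ext (show t.val = 2 * (t.val / 2) by omega)
    rw [ht, flatPairs_even]
    rfl
  · have ht : t = ⟨2 * (⟨t.val / 2, by omega⟩ : Fin m).val + 1, by omega⟩ :=
      Fin.ext (show t.val = 2 * (t.val / 2) + 1 by omega)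
    rw [ht, flatPairs_odd]
    rfl

lemma pairsOfPerm_injective {m : ℕ} {h : Fin (2 * m) → Fin (2 * m + 1)}
    (hh : Function.Injective h) : Function.Injective (pairsOfPerm h) := by
  intro σ σ' hσ
  refine Equiv.ext fun t => ?_
  have h1 := congrArg (fun g => flatPairs g t) hσ
  simp only [flatPairs_pairsOfPerm] at h1
  exact hh h1

/-- The permutation of `Fin (2m+1)` sending `0 ↦ i` and `t.succ ↦ i.succAbove (σ t)`. -/
def tauPerm {m : ℕ} (i : Fin (2 * m + 1)) (σ : Equiv.Perm (Fin (2 * m))) :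
    Equiv.Perm (Fin (2 * m + 1)) :=
  (Fin.cycleRange i)⁻¹ * Equiv.Perm.decomposeFin.symm (0, σ)

lemma tauPerm_zero {m : ℕ} (i : Fin (2 * m + 1)) (σ : Equiv.Perm (Fin (2 * m))) :
    tauPerm i σ 0 = i := by
  simp only [tauPerm, Equiv.Perm.mul_apply, Equiv.Perm.decomposeFin_symm_apply_zero]
  rw [Equiv.Perm.inv_eq_iff_eq]
  exact (Fin.cycleRange_self i).symm

lemma tauPerm_succ {m : ℕ} (i : Fin (2 * m + 1)) (σ : Equiv.Perm (Fin (2 * m)))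
    (t : Fin (2 * m)) : tauPerm i σ t.succ = i.succAbove (σ t) := by
  simp only [tauPerm, Equiv.Perm.mul_apply, Equiv.Perm.decomposeFin_symm_apply_succ,
    Equiv.swap_self, Equiv.refl_apply]
  rw [Equiv.Perm.inv_eq_iff_eq]
  exact (Fin.cycleRange_succAbove i (σ t)).symm

lemma tauPerm_sign {m : ℕ} (i : Fin (2 * m + 1)) (σ : Equiv.Perm (Fin (2 * m))) :
    Equiv.Perm.sign (tauPerm i σ) = (-1) ^ (i : ℕ) * Equiv.Perm.sign σ := by
  simp [tauPerm, Fin.sign_cycleRange]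

lemma exists_perm_of_injective {m : ℕ} (i : Fin (2 * m + 1))
    (g : Fin m → Fin (2 * m + 1) × Fin (2 * m + 1))
    (hinj : Function.Injective (Fin.cons i (flatPairs g) : Fin (2 * m + 1) → Fin (2 * m + 1))) :
    ∃ σ : Equiv.Perm (Fin (2 * m)), g = pairsOfPerm i.succAbove σ := by
  have hne : ∀ t : Fin (2 * m), flatPairs g t ≠ i := by
    intro t ht
    have hc : (Fin.cons i (flatPairs g) : Fin (2 * m + 1) → Fin (2 * m + 1)) t.succ
        = (Fin.cons i (flatPairs g) : Fin (2 * m + 1) → Fin (2 * m + 1)) 0 := by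
      rw [Fin.cons_succ, Fin.cons_zero, ht]
    exact (Fin.succ_ne_zero t) (hinj hc)
  choose z hz using fun t => Fin.exists_succAbove_eq (hne t)
  have hzinj : Function.Injective z := by
    intro a b hab
    have h1 : flatPairs g a = flatPairs g b := by rw [← hz a, ← hz b, hab]
    have h2 : (Fin.cons i (flatPairs g) : Fin (2 * m + 1) → Fin (2 * m + 1)) a.succ
        = (Fin.cons i (flatPairs g) : Fin (2 * m + 1) → Fin (2 * m + 1)) b.succ := by
      rw [Fin.cons_succ, Fin.cons_succ, h1]
    exact Fin.succ_injective _ (hinj h2)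
  refine ⟨Equiv.ofBijective z ((Finite.injective_iff_bijective).1 hzinj), funext fun k => ?_⟩
  refine Prod.ext ?_ ?_
  · rw [show (pairsOfPerm i.succAbove (Equiv.ofBijective z _) k).1
        = i.succAbove (z ⟨2 * k.val, by have := k.isLt; omega⟩) from rfl, hz, flatPairs_even]
  · rw [show (pairsOfPerm i.succAbove (Equiv.ofBijective z _) k).2
        = i.succAbove (z ⟨2 * k.val + 1, by have := k.isLt; omega⟩) from rfl, hz, flatPairs_odd]

end Perms


/-- The Pfaffian formula for the map `g` in Lemma 2.4 (Buchsbaum–Eisenbud):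
with `F` free of odd rank `n = 2m+1 ≥ 3` over a commutative algebra `R` over a
field of characteristic zero, basis `e_1, …, e_n`, and
`φ = Σ_{i<j} x_{ij} e_i ∧ e_j ∈ Λ²F` with associated skew-symmetric matrix
`Φ = (x_{ij})`, one has, for each `i`,
`e_i ∧ (Λ^m φ) = m! (−1)^{i−1} Pf(Φ_i) · e_1 ∧ ⋯ ∧ e_n`,
where `Φ_i` is `Φ` with its `i`-th row and column deleted.  (Indices here are
`0`-based, so the sign `(−1)^{i−1}` of the paper becomes `(−1)^{i}`.) -/
theorem stmt_5 {R F : Type*} [CommRing R] [Algebra ℚ R]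
    [AddCommGroup F] [Module R F]
    (m : ℕ) (hm : 1 ≤ m) (e : Module.Basis (Fin (2 * m + 1)) R F)
    (x : Matrix (Fin (2 * m + 1)) (Fin (2 * m + 1)) R)
    (hx : ∀ i j, x j i = - x i j)
    (φ : ExteriorAlgebra R F)
    (hφ : φ = ∑ i : Fin (2 * m + 1), ∑ j : Fin (2 * m + 1),
        if i < j then x i j • (ι R (e i) * ι R (e j)) else 0)
    (i : Fin (2 * m + 1)) :
    ι R (e i) * φ ^ m =
      ((m.factorial : R) * (-1 : R) ^ (i : ℕ) *
          pfaffian m (x.submatrix i.succAbove i.succAbove)) •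
        (List.ofFn fun j : Fin (2 * m + 1) => ι R (e j)).prod := by
  classical
  have hsA : ∀ (s : ℤˣ) (z : ExteriorAlgebra R F), s • z = ((s : ℤ) : R) • z := by
    intro s z
    rw [Units.smul_def, Int.cast_smul_eq_zsmul]
  -- the symmetrized 2-form
  have hswap : ∀ p : Fin (2 * m + 1) × Fin (2 * m + 1),
      x p.2 p.1 • (ι R (e p.2) * ι R (e p.1)) = x p.1 p.2 • (ι R (e p.1) * ι R (e p.2)) := by
    intro p
    rw [hx p.1 p.2, show ι R (e p.2) * ι R (e p.1) = -(ι R (e p.1) * ι R (e p.2)) from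
      eq_neg_of_add_eq_zero_left (ι_add_mul_swap (e p.2) (e p.1)), neg_smul, smul_neg, neg_neg]
  have hsplit : ∀ p : Fin (2 * m + 1) × Fin (2 * m + 1),
      x p.1 p.2 • (ι R (e p.1) * ι R (e p.2))
        = (if p.1 < p.2 then x p.1 p.2 • (ι R (e p.1) * ι R (e p.2)) else 0)
          + (if p.2 < p.1 then x p.1 p.2 • (ι R (e p.1) * ι R (e p.2)) else 0) := by
    intro p
    rcases lt_trichotomy p.1 p.2 with hlt | heq | hgt
    · rw [if_pos hlt, if_neg (asymm hlt), add_zero]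
    · rw [if_neg (by simp [heq]), if_neg (by simp [heq]), add_zero,
        show p.2 = p.1 from heq.symm, ι_sq_zero, smul_zero]
    · rw [if_neg (asymm hgt), if_pos hgt, zero_add]
  have hsum : ∑ p : Fin (2 * m + 1) × Fin (2 * m + 1),
      x p.1 p.2 • (ι R (e p.1) * ι R (e p.2)) = φ + φ := by
    have hφ2 : (∑ p : Fin (2 * m + 1) × Fin (2 * m + 1),
        if p.1 < p.2 then x p.1 p.2 • (ι R (e p.1) * ι R (e p.2)) else 0) = φ := by
      rw [hφ]
      exact Fintype.sum_prod_type _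
    have h2 : (∑ p : Fin (2 * m + 1) × Fin (2 * m + 1),
          if p.2 < p.1 then x p.1 p.2 • (ι R (e p.1) * ι R (e p.2)) else 0)
        = ∑ p : Fin (2 * m + 1) × Fin (2 * m + 1),
          if p.1 < p.2 then x p.1 p.2 • (ι R (e p.1) * ι R (e p.2)) else 0 := by
      refine Fintype.sum_equiv (Equiv.prodComm _ _) _ _ fun p => ?_
      show (if p.2 < p.1 then x p.1 p.2 • (ι R (e p.1) * ι R (e p.2)) else 0)
        = if p.2 < p.1 then x p.2 p.1 • (ι R (e p.2) * ι R (e p.1)) else 0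
      rw [hswap p]
    calc ∑ p : Fin (2 * m + 1) × Fin (2 * m + 1), x p.1 p.2 • (ι R (e p.1) * ι R (e p.2))
        = (∑ p : Fin (2 * m + 1) × Fin (2 * m + 1),
            if p.1 < p.2 then x p.1 p.2 • (ι R (e p.1) * ι R (e p.2)) else 0)
          + ∑ p : Fin (2 * m + 1) × Fin (2 * m + 1),
            if p.2 < p.1 then x p.1 p.2 • (ι R (e p.1) * ι R (e p.2)) else 0 := by
          rw [← Finset.sum_add_distrib]
          exact Finset.sum_congr rfl fun p _ => hsplit p
      _ = φ + φ := by rw [h2, hφ2]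
  have hψpow : ((2 : R) ^ m) • φ ^ m
      = (∑ p : Fin (2 * m + 1) × Fin (2 * m + 1),
          x p.1 p.2 • (ι R (e p.1) * ι R (e p.2))) ^ m := by
    rw [hsum, ← two_smul R φ, smul_pow]

  have h2u : IsUnit ((2 : R) ^ m) := by
    have h2 : IsUnit (2 : R) := by
      have hq : IsUnit (2 : ℚ) := isUnit_iff_ne_zero.mpr two_ne_zero
      have h := hq.map (algebraMap ℚ R)
      rwa [show (algebraMap ℚ R) 2 = 2 from map_ofNat _ 2] at h
    exact h2.pow m
  have step : ∀ g : Fin m → Fin (2 * m + 1) × Fin (2 * m + 1),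
      ι R (e i) *
          (List.ofFn fun k => x (g k).1 (g k).2 • (ι R (e (g k).1) * ι R (e (g k).2))).prod
        = (∏ k, x (g k).1 (g k).2) •
            (ιMulti R (2 * m + 1)) (fun t => e ((Fin.cons i (flatPairs g) : Fin (2 * m + 1) → Fin (2 * m + 1)) t)) := by
    intro g
    have e1 : (List.ofFn fun k => x (g k).1 (g k).2 • (ι R (e (g k).1) * ι R (e (g k).2))).prod
        = (∏ k, x (g k).1 (g k).2) •
            (List.ofFn fun k => ι R (e (g k).1) * ι R (e (g k).2)).prod :=
      prod_ofFn_smul m (fun k => x (g k).1 (g k).2)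
        (fun k => ι R (e (g k).1) * ι R (e (g k).2))
    have e2 : (List.ofFn fun k => ι R (e (g k).1) * ι R (e (g k).2)).prod
        = (List.ofFn fun t : Fin (2 * m) => ι R (e (flatPairs g t))).prod :=
      prod_ofFn_pairs (fun j : Fin (2 * m + 1) => ι R (e j)) m g
    rw [e1, mul_smul_comm, e2]
    congr 1
    rw [ιMulti_apply, List.ofFn_succ, List.prod_cons]
    simp only [Fin.cons_zero, Fin.cons_succ]
  have expand : ι R (e i) * (∑ p : Fin (2 * m + 1) × Fin (2 * m + 1),
        x p.1 p.2 • (ι R (e p.1) * ι R (e p.2))) ^ m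
      = ∑ g : Fin m → Fin (2 * m + 1) × Fin (2 * m + 1),
          (∏ k, x (g k).1 (g k).2) •
            (ιMulti R (2 * m + 1)) (fun t => e ((Fin.cons i (flatPairs g) : Fin (2 * m + 1) → Fin (2 * m + 1)) t)) := by
    rw [sum_pow_expand, Finset.mul_sum]
    exact Finset.sum_congr rfl fun g _ => step g
  have hvanish : ∀ g : Fin m → Fin (2 * m + 1) × Fin (2 * m + 1),
      g ∉ Finset.image (pairsOfPerm i.succAbove) Finset.univ →
      (∏ k, x (g k).1 (g k).2) •
          (ιMulti R (2 * m + 1)) (fun t => e ((Fin.cons i (flatPairs g) : Fin (2 * m + 1) → Fin (2 * m + 1)) t)) = 0 := by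
    intro g hg
    by_cases hinj : Function.Injective
        (Fin.cons i (flatPairs g) : Fin (2 * m + 1) → Fin (2 * m + 1))
    · exact absurd (Finset.mem_image.mpr ⟨(exists_perm_of_injective i g hinj).choose,
        Finset.mem_univ _, ((exists_perm_of_injective i g hinj).choose_spec).symm⟩) hg
    · rw [Function.not_injective_iff] at hinj
      obtain ⟨a, b, hab, hne⟩ := hinj
      have hz0 : (ιMulti R (2 * m + 1))
          (fun t => e ((Fin.cons i (flatPairs g) : Fin (2 * m + 1) → Fin (2 * m + 1)) t)) = 0 :=
        AlternatingMap.map_eq_zero_of_eq _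
          (fun t => e ((Fin.cons i (flatPairs g) : Fin (2 * m + 1) → Fin (2 * m + 1)) t))
          (congrArg e hab) hne
      rw [hz0, smul_zero]
  have himage : (∑ g : Fin m → Fin (2 * m + 1) × Fin (2 * m + 1),
        (∏ k, x (g k).1 (g k).2) •
          (ιMulti R (2 * m + 1)) (fun t => e ((Fin.cons i (flatPairs g) : Fin (2 * m + 1) → Fin (2 * m + 1)) t)))
      = ∑ σ : Equiv.Perm (Fin (2 * m)),
          (∏ k, x ((pairsOfPerm i.succAbove σ) k).1 ((pairsOfPerm i.succAbove σ) k).2) •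
            (ιMulti R (2 * m + 1))
              (fun t => e ((Fin.cons i (flatPairs (pairsOfPerm i.succAbove σ)) : Fin (2 * m + 1) → Fin (2 * m + 1)) t)) := by
    have himg := Finset.sum_image (s := (Finset.univ : Finset (Equiv.Perm (Fin (2 * m)))))
      (f := fun gg : Fin m → Fin (2 * m + 1) × Fin (2 * m + 1) =>
        (∏ k, x (gg k).1 (gg k).2) •
          (ιMulti R (2 * m + 1))
            fun t => e ((Fin.cons i (flatPairs gg) : Fin (2 * m + 1) → Fin (2 * m + 1)) t))
      (g := pairsOfPerm i.succAbove)
      (fun σ _ σ' _ hσ => pairsOfPerm_injective Fin.succAbove_right_injective hσ)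
    exact ((Finset.sum_subset (Finset.subset_univ _) (fun g _ hg => hvanish g hg)).symm).trans himg
  have hterm : ∀ σ : Equiv.Perm (Fin (2 * m)),
      (∏ k, x ((pairsOfPerm i.succAbove σ) k).1 ((pairsOfPerm i.succAbove σ) k).2) •
          (ιMulti R (2 * m + 1))
            (fun t => e ((Fin.cons i (flatPairs (pairsOfPerm i.succAbove σ)) : Fin (2 * m + 1) → Fin (2 * m + 1)) t))
        = ((-1 : R) ^ (i : ℕ) * (((Equiv.Perm.sign σ : ℤ) : R) *
            ∏ k, x ((pairsOfPerm i.succAbove σ) k).1 ((pairsOfPerm i.succAbove σ) k).2)) •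
            (ιMulti R (2 * m + 1)) (fun j : Fin (2 * m + 1) => e j) := by
    intro σ
    have hvec : (fun t => e ((Fin.cons i (flatPairs (pairsOfPerm i.succAbove σ)) : Fin (2 * m + 1) → Fin (2 * m + 1)) t))
        = (fun j : Fin (2 * m + 1) => e j) ∘ ⇑(tauPerm i σ) := by
      funext t
      show e ((Fin.cons i (flatPairs (pairsOfPerm i.succAbove σ)) : Fin (2 * m + 1) → Fin (2 * m + 1)) t) = e (tauPerm i σ t)
      refine congrArg e ?_
      refine Fin.cases ?_ (fun s => ?_) t
      · rw [Fin.cons_zero, tauPerm_zero]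
      · rw [Fin.cons_succ, flatPairs_pairsOfPerm, tauPerm_succ]
    rw [hvec, AlternatingMap.map_perm, hsA, smul_smul]
    congr 1
    have hsgn : ((Equiv.Perm.sign (tauPerm i σ) : ℤ) : R)
        = (-1 : R) ^ (i : ℕ) * ((Equiv.Perm.sign σ : ℤ) : R) := by
      rw [tauPerm_sign]
      push_cast
      ring
    rw [hsgn]
    ring
  have hprodσ : ∀ σ : Equiv.Perm (Fin (2 * m)),
      (∏ k, x ((pairsOfPerm i.succAbove σ) k).1 ((pairsOfPerm i.succAbove σ) k).2)
        = ∏ k : Fin m, (x.submatrix i.succAbove i.succAbove)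
            (σ ⟨2 * k.val, by have := k.isLt; omega⟩)
            (σ ⟨2 * k.val + 1, by have := k.isLt; omega⟩) := fun σ => rfl
  have halg : (2 : R) ^ m *
      ((m.factorial : R) * algebraMap ℚ R (1 / ((2 : ℚ) ^ m * (m.factorial : ℚ)))) = 1 := by
    have h2 : (2 : R) ^ m = algebraMap ℚ R ((2 : ℚ) ^ m) := by
      rw [map_pow, map_ofNat]
    have hf : (m.factorial : R) = algebraMap ℚ R (m.factorial : ℚ) := by
      rw [map_natCast]
    rw [h2, hf, ← map_mul, ← map_mul, ← map_one (algebraMap ℚ R)]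
    congr 1
    have hne : ((2 : ℚ) ^ m * (m.factorial : ℚ)) ≠ 0 := by
      positivity
    field_simp
  have key : ((2 : R) ^ m) • (ι R (e i) * φ ^ m)
      = ((2 : R) ^ m) • (((m.factorial : R) * (-1 : R) ^ (i : ℕ) *
          pfaffian m (x.submatrix i.succAbove i.succAbove)) •
        (List.ofFn fun j : Fin (2 * m + 1) => ι R (e j)).prod) := by
    have hE : (List.ofFn fun j : Fin (2 * m + 1) => ι R (e j)).prod
        = (ιMulti R (2 * m + 1)) (fun j : Fin (2 * m + 1) => e j) := (ιMulti_apply _).symm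
    rw [hE]
    calc ((2 : R) ^ m) • (ι R (e i) * φ ^ m)
        = ι R (e i) * (((2 : R) ^ m) • φ ^ m) := (mul_smul_comm _ _ _).symm
      _ = ι R (e i) * (∑ p : Fin (2 * m + 1) × Fin (2 * m + 1),
            x p.1 p.2 • (ι R (e p.1) * ι R (e p.2))) ^ m := by rw [hψpow]
      _ = ∑ g : Fin m → Fin (2 * m + 1) × Fin (2 * m + 1),
            (∏ k, x (g k).1 (g k).2) •
              (ιMulti R (2 * m + 1)) (fun t => e ((Fin.cons i (flatPairs g) : Fin (2 * m + 1) → Fin (2 * m + 1)) t)) := expand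
      _ = ∑ σ : Equiv.Perm (Fin (2 * m)),
            (∏ k, x ((pairsOfPerm i.succAbove σ) k).1 ((pairsOfPerm i.succAbove σ) k).2) •
              (ιMulti R (2 * m + 1))
                (fun t => e ((Fin.cons i (flatPairs (pairsOfPerm i.succAbove σ)) : Fin (2 * m + 1) → Fin (2 * m + 1)) t)) := himage
      _ = ∑ σ : Equiv.Perm (Fin (2 * m)),
            ((-1 : R) ^ (i : ℕ) * (((Equiv.Perm.sign σ : ℤ) : R) *
              ∏ k, x ((pairsOfPerm i.succAbove σ) k).1 ((pairsOfPerm i.succAbove σ) k).2)) •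
              (ιMulti R (2 * m + 1)) (fun j : Fin (2 * m + 1) => e j) :=
          Finset.sum_congr rfl fun σ _ => hterm σ
      _ = ((2 : R) ^ m) • (((m.factorial : R) * (-1 : R) ^ (i : ℕ) *
            pfaffian m (x.submatrix i.succAbove i.succAbove)) •
          (ιMulti R (2 * m + 1)) (fun j : Fin (2 * m + 1) => e j)) := by
        rw [← Finset.sum_smul, smul_smul]
        congr 1
        rw [← Finset.mul_sum]
        unfold pfaffian
        rw [show (∑ σ : Equiv.Perm (Fin (2 * m)),
            (((Equiv.Perm.sign σ : ℤ) : R) *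
              ∏ k, x ((pairsOfPerm i.succAbove σ) k).1 ((pairsOfPerm i.succAbove σ) k).2))
          = ∑ σ : Equiv.Perm (Fin (2 * m)),
            (((Equiv.Perm.sign σ : ℤ) : R) *
              ∏ k : Fin m, (x.submatrix i.succAbove i.succAbove)
                (σ ⟨2 * k.val, by have := k.isLt; omega⟩)
                (σ ⟨2 * k.val + 1, by have := k.isLt; omega⟩)) from
          Finset.sum_congr rfl fun σ _ => by rw [hprodσ σ]]
        set S := ∑ σ : Equiv.Perm (Fin (2 * m)),
            (((Equiv.Perm.sign σ : ℤ) : R) *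
              ∏ k : Fin m, (x.submatrix i.succAbove i.succAbove)
                (σ ⟨2 * k.val, by have := k.isLt; omega⟩)
                (σ ⟨2 * k.val + 1, by have := k.isLt; omega⟩)) with hS
        rw [show (2 : R) ^ m * ((m.factorial : R) * (-1 : R) ^ (i : ℕ) *
            (algebraMap ℚ R (1 / ((2 : ℚ) ^ m * (m.factorial : ℚ))) * S))
          = ((2 : R) ^ m * ((m.factorial : R) *
              algebraMap ℚ R (1 / ((2 : ℚ) ^ m * (m.factorial : ℚ))))) *
            ((-1 : R) ^ (i : ℕ) * S) from by ring, halg, one_mul]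
  exact (h2u.smul_left_cancel).mp key
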